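/- arXiv:2509.20108 — 2 statements merged into one kernel-verified Lean document; each statement's English description precedes it below -/
import Mathlib

section
/- Let Δ ⊂ I be a finite set of distinct points in an interval I, h : I → ℝ Lipschitz with constant L, and t ∈ I. Then |h(t) - E[h;Δ](t)| ≤ L · |φ_Δ(t)| · Σ_{t' ∈ Δ} 1/|φ_{Δ∖{t'}}(t')|. -/
open Finset Polynomial

/-- Lipschitz stability estimate for Lagrange extrapolation:
`|h t - E[h;Δ](t)| ≤ L · |φ_Δ(t)| · Σ_{t'∈Δ} 1/|φ_{Δ∖{t'}}(t')|`. -/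
theorem stmt_10 (m : ℕ) (a b : ℝ) (hab : a ≤ b)
    (nodes : Fin (m + 1) → ℝ) (hinj : Function.Injective nodes)
    (hmem : ∀ j, nodes j ∈ Set.Icc a b)
    (h : ℝ → ℝ) (L : NNReal) (hL : LipschitzOnWith L h (Set.Icc a b))
    (t : ℝ) (ht : t ∈ Set.Icc a b) :
    |h t - ∑ j, h (nodes j) *
        ∏ i ∈ Finset.univ.erase j, (t - nodes i) / (nodes j - nodes i)|
      ≤ (L : ℝ) * |∏ i, (t - nodes i)| *
        ∑ j, 1 / |∏ i ∈ Finset.univ.erase j, (nodes j - nodes i)| := by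
  set ℓ : Fin (m + 1) → ℝ := fun j => ∏ i ∈ Finset.univ.erase j,
      (t - nodes i) / (nodes j - nodes i) with hℓ
  -- the Lagrange basis sums to 1
  have hsum : ∑ j, ℓ j = 1 := by
    have h1 : ∑ j ∈ (univ : Finset (Fin (m + 1))), Lagrange.basis univ nodes j = 1 :=
      Lagrange.sum_basis hinj.injOn univ_nonempty
    have h2 := congrArg (Polynomial.eval t) h1
    rw [Polynomial.eval_finset_sum, Polynomial.eval_one] at h2
    rw [← h2]
    refine Finset.sum_congr rfl fun j _ => ?_
    rw [Lagrange.basis, Polynomial.eval_prod, hℓ]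
    refine Finset.prod_congr rfl fun i _ => ?_
    rw [Lagrange.basisDivisor]
    simp [div_eq_inv_mul]
  have key : h t - ∑ j, h (nodes j) * ℓ j = ∑ j, (h t - h (nodes j)) * ℓ j := by
    simp_rw [sub_mul]
    rw [Finset.sum_sub_distrib, ← Finset.mul_sum, hsum, mul_one]
  rw [key]
  calc |∑ j, (h t - h (nodes j)) * ℓ j| ≤ ∑ j, |(h t - h (nodes j)) * ℓ j| :=
        Finset.abs_sum_le_sum_abs _ _
    _ ≤ ∑ j, (L : ℝ) * |∏ i, (t - nodes i)| *
          (1 / |∏ i ∈ Finset.univ.erase j, (nodes j - nodes i)|) := by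
        refine Finset.sum_le_sum fun j _ => ?_
        rw [abs_mul]
        have hlip : |h t - h (nodes j)| ≤ (L : ℝ) * |t - nodes j| := by
          have := hL.dist_le_mul t ht (nodes j) (hmem j)
          rwa [Real.dist_eq, Real.dist_eq] at this
        have hℓabs : |ℓ j| = |∏ i ∈ Finset.univ.erase j, (t - nodes i)| /
            |∏ i ∈ Finset.univ.erase j, (nodes j - nodes i)| := by
          simp only [hℓ, Finset.prod_div_distrib, abs_div]
        calc |h t - h (nodes j)| * |ℓ j|
            ≤ ((L : ℝ) * |t - nodes j|) * |ℓ j| := by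
              exact mul_le_mul_of_nonneg_right hlip (abs_nonneg _)
          _ = (L : ℝ) * |∏ i, (t - nodes i)| *
              (1 / |∏ i ∈ Finset.univ.erase j, (nodes j - nodes i)|) := by
              rw [hℓabs, ← Finset.mul_prod_erase univ _ (mem_univ j), abs_mul]
              ring
    _ = (L : ℝ) * |∏ i, (t - nodes i)| *
          ∑ j, 1 / |∏ i ∈ Finset.univ.erase j, (nodes j - nodes i)| := by
        rw [Finset.mul_sum]
end

section
/- Let t_k = t₀ + kτ (k = 0,…,m, τ > 0), Δ = {t₀,…,t_m}, and let h be Lipschitz with constant L on [t₀, t_m + τ]. Then for all t ∈ [t_m, t_m + τ], |h(t) - E[h;Δ](t)| ≤ 2^m (m+1) τ L. -/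
open Finset
open scoped Nat

private lemma prod_sub_eq_factorial (n : ℕ) : (∏ i ∈ Finset.range n, (n - i)) = n ! := by
  induction n with
  | zero => simp
  | succ n ih =>
    rw [Finset.prod_range_succ']
    simp only [Nat.succ_sub_succ, Nat.sub_zero]
    rw [ih, Nat.factorial_succ]
    ring

private lemma dist_prod_eq (m j : ℕ) (hj : j ≤ m) :
    (∏ i ∈ (Finset.range (m + 1)).erase j, Nat.dist j i) = j ! * (m - j)! := by
  have hsplit : (Finset.range (m + 1)).erase j
      = Finset.range j ∪ Finset.Ico (j + 1) (m + 1) := by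
    ext i
    simp only [Finset.mem_erase, Finset.mem_range, Finset.mem_union, Finset.mem_Ico]
    omega
  have hdisj : Disjoint (Finset.range j) (Finset.Ico (j + 1) (m + 1)) := by
    rw [Finset.disjoint_left]
    intro a ha hb
    simp only [Finset.mem_range] at ha
    simp only [Finset.mem_Ico] at hb
    omega
  rw [hsplit, Finset.prod_union hdisj]
  congr 1
  · calc ∏ i ∈ Finset.range j, Nat.dist j i = ∏ i ∈ Finset.range j, (j - i) := by
          refine Finset.prod_congr rfl fun i hi => ?_
          exact Nat.dist_eq_sub_of_le_right (le_of_lt (Finset.mem_range.mp hi))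
      _ = j ! := prod_sub_eq_factorial j
  · rw [Finset.prod_Ico_eq_prod_range]
    calc ∏ k ∈ Finset.range (m + 1 - (j + 1)), Nat.dist j (j + 1 + k)
        = ∏ k ∈ Finset.range (m - j), (k + 1) := by
          rw [show m + 1 - (j + 1) = m - j from by omega]
          refine Finset.prod_congr rfl fun k _ => ?_
          rw [Nat.dist_eq_sub_of_le (by omega)]
          omega
      _ = (m - j)! := Finset.prod_range_add_one_eq_factorial _

/-- Equispaced Lipschitz extrapolation estimate:
for `t ∈ [t_m, t_m + τ]`, `|h t - E[h;Δ](t)| ≤ 2^m (m+1) τ L`. -/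
theorem stmt_13 (m : ℕ) (t₀ τ : ℝ) (hτ : 0 < τ)
    (h : ℝ → ℝ) (L : NNReal)
    (hL : LipschitzOnWith L h (Set.Icc t₀ (t₀ + m * τ + τ)))
    (t : ℝ) (ht : t ∈ Set.Icc (t₀ + m * τ) (t₀ + m * τ + τ)) :
    |h t - ∑ j : Fin (m + 1), h (t₀ + (j : ℕ) * τ) *
        ∏ i ∈ Finset.univ.erase j,
          (t - (t₀ + (i : ℕ) * τ)) / ((t₀ + (j : ℕ) * τ) - (t₀ + (i : ℕ) * τ))|
      ≤ 2 ^ m * (m + 1) * τ * (L : ℝ) := by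
  obtain ⟨ht1, ht2⟩ := ht
  set v : Fin (m + 1) → ℝ := fun i => t₀ + (i : ℕ) * τ with hv
  set ℓ : Fin (m + 1) → ℝ :=
    fun j => ∏ i ∈ Finset.univ.erase j, (t - v i) / (v j - v i) with hℓ
  -- injectivity of nodes
  have hinj : Set.InjOn v (Finset.univ : Finset (Fin (m + 1))) := by
    intro a _ b _ hab
    have h1 : ((a : ℕ) : ℝ) * τ = ((b : ℕ) : ℝ) * τ := by
      have := hab; simp only [hv] at this; linarith
    have h2 : ((a : ℕ) : ℝ) = ((b : ℕ) : ℝ) :=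
      mul_right_cancel₀ (ne_of_gt hτ) h1
    exact Fin.ext (Nat.cast_injective h2)
  -- partition of unity
  have hsum : ∑ j : Fin (m + 1), ℓ j = 1 := by
    have h1 := Lagrange.sum_basis (s := (Finset.univ : Finset (Fin (m + 1)))) (v := v)
      hinj ⟨0, Finset.mem_univ _⟩
    have h2 := congrArg (Polynomial.eval t) h1
    rw [Polynomial.eval_finset_sum, Polynomial.eval_one] at h2
    rw [← h2]
    refine Finset.sum_congr rfl fun j _ => ?_
    rw [hℓ, Lagrange.basis, Polynomial.eval_prod]
    refine Finset.prod_congr rfl fun i _ => ?_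
    simp [Lagrange.basisDivisor, div_eq_inv_mul]
  -- membership facts
  have hmem_t : t ∈ Set.Icc t₀ (t₀ + m * τ + τ) := by
    constructor
    · have : (0 : ℝ) ≤ (m : ℝ) * τ := by positivity
      linarith
    · exact ht2
  have hmem_v : ∀ j : Fin (m + 1), v j ∈ Set.Icc t₀ (t₀ + m * τ + τ) := by
    intro j
    have hj : ((j : ℕ) : ℝ) ≤ (m : ℝ) := by exact_mod_cast Fin.is_le j
    constructor
    · have : (0 : ℝ) ≤ ((j : ℕ) : ℝ) * τ := by positivity
      simp only [hv]; linarith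
    · simp only [hv]; nlinarith
  -- nonnegativity and upper bounds for t - v i
  have htv_nonneg : ∀ i : Fin (m + 1), 0 ≤ t - v i := by
    intro i
    have hi : ((i : ℕ) : ℝ) ≤ (m : ℝ) := by exact_mod_cast Fin.is_le i
    simp only [hv]; nlinarith
  have htv_le : ∀ i : Fin (m + 1), t - v i ≤ ((m + 1 - (i : ℕ) : ℕ) : ℝ) * τ := by
    intro i
    have hi : (i : ℕ) ≤ m := Fin.is_le i
    have : ((m + 1 - (i : ℕ) : ℕ) : ℝ) = (m : ℝ) + 1 - ((i : ℕ) : ℝ) := by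
      push_cast [Nat.cast_sub (by omega : (i : ℕ) ≤ m + 1)]; ring
    rw [this]
    simp only [hv]; nlinarith
  -- rewrite difference
  have key : h t - ∑ j : Fin (m + 1), h (v j) * ℓ j
      = ∑ j : Fin (m + 1), (h t - h (v j)) * ℓ j := by
    have : ∑ j : Fin (m + 1), (h t - h (v j)) * ℓ j
        = h t * (∑ j : Fin (m + 1), ℓ j) - ∑ j : Fin (m + 1), h (v j) * ℓ j := by
      rw [Finset.mul_sum, ← Finset.sum_sub_distrib]
      exact Finset.sum_congr rfl fun j _ => by ring
    rw [this, hsum, mul_one]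
  have hgoal : |h t - ∑ j : Fin (m + 1), h (v j) * ℓ j|
      ≤ 2 ^ m * (m + 1) * τ * (L : ℝ) := by
    rw [key]
    calc |∑ j : Fin (m + 1), (h t - h (v j)) * ℓ j|
        ≤ ∑ j : Fin (m + 1), |(h t - h (v j)) * ℓ j| :=
          Finset.abs_sum_le_sum_abs _ _
      _ ≤ ∑ j : Fin (m + 1), (L : ℝ) * (τ * (((m + 1) * Nat.choose m (j : ℕ) : ℕ) : ℝ)) := by
          refine Finset.sum_le_sum fun j _ => ?_
          have hjm : (j : ℕ) ≤ m := Fin.is_le j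
          -- Lipschitz bound
          have hlip : |h t - h (v j)| ≤ (L : ℝ) * (t - v j) := by
            have := hL.dist_le_mul t hmem_t (v j) (hmem_v j)
            rw [Real.dist_eq, Real.dist_eq, abs_of_nonneg (htv_nonneg j)] at this
            exact this
          -- bound on (t - v j) * |ℓ j|
          have habsℓ : |ℓ j| = (∏ i ∈ Finset.univ.erase j, (t - v i))
              / ∏ i ∈ Finset.univ.erase j, |v j - v i| := by
            rw [hℓ, Finset.abs_prod, ← Finset.prod_div_distrib]
            refine Finset.prod_congr rfl fun i _ => ?_
            rw [abs_div, abs_of_nonneg (htv_nonneg i)]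
          -- denominator value
          have hden : ∏ i ∈ Finset.univ.erase j, |v j - v i|
              = τ ^ m * ((Nat.factorial (j : ℕ) * Nat.factorial (m - (j : ℕ)) : ℕ) : ℝ) := by
            have hstep : ∀ i : Fin (m + 1),
                |v j - v i| = τ * ((Nat.dist (j : ℕ) (i : ℕ) : ℕ) : ℝ) := by
              intro i
              have : v j - v i = (((j : ℕ) : ℝ) - ((i : ℕ) : ℝ)) * τ := by
                simp only [hv]; ring
              rw [this, abs_mul, abs_of_pos hτ]
              have habs : |((j : ℕ) : ℝ) - ((i : ℕ) : ℝ)|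
                  = ((Nat.dist (j : ℕ) (i : ℕ) : ℕ) : ℝ) := by
                rcases le_total ((i : ℕ)) ((j : ℕ)) with hle | hle
                · rw [Nat.dist_eq_sub_of_le_right hle, Nat.cast_sub hle, abs_of_nonneg]
                  have : ((i : ℕ) : ℝ) ≤ ((j : ℕ) : ℝ) := Nat.cast_le.mpr hle
                  linarith
                · rw [Nat.dist_eq_sub_of_le hle, Nat.cast_sub hle, abs_of_nonpos, neg_sub]
                  have : ((j : ℕ) : ℝ) ≤ ((i : ℕ) : ℝ) := Nat.cast_le.mpr hle
                  linarith
              rw [habs]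
              ring
            rw [Finset.prod_congr rfl fun i _ => hstep i, Finset.prod_mul_distrib,
              Finset.prod_const]
            have hcard : ((Finset.univ : Finset (Fin (m + 1))).erase j).card = m := by
              rw [Finset.card_erase_of_mem (Finset.mem_univ j), Finset.card_univ,
                Fintype.card_fin]
              omega
            rw [hcard]
            congr 1
            -- transfer product over Fin to product over range
            have himg : Finset.image Fin.val ((Finset.univ : Finset (Fin (m + 1))).erase j)
                = (Finset.range (m + 1)).erase (j : ℕ) := by
              ext n
              simp only [Finset.mem_image, Finset.mem_erase, Finset.mem_univ, and_true,
                Finset.mem_range]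
              constructor
              · rintro ⟨i, hi, rfl⟩
                exact ⟨fun hc => hi (Fin.ext hc), i.isLt⟩
              · rintro ⟨hne, hlt⟩
                exact ⟨⟨n, hlt⟩, fun hc => hne (congrArg Fin.val hc), rfl⟩
            calc ∏ i ∈ (Finset.univ : Finset (Fin (m + 1))).erase j,
                  ((Nat.dist (j : ℕ) (i : ℕ) : ℕ) : ℝ)
                = ∏ n ∈ (Finset.range (m + 1)).erase (j : ℕ),
                    ((Nat.dist (j : ℕ) n : ℕ) : ℝ) := by
                  rw [← himg, Finset.prod_image
                    (fun a _ b _ hab => Fin.val_injective hab)]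
              _ = ((Nat.factorial (j : ℕ) * Nat.factorial (m - (j : ℕ)) : ℕ) : ℝ) := by
                  rw [← Nat.cast_prod, dist_prod_eq m (j : ℕ) hjm]
          have hdenpos : (0 : ℝ) < τ ^ m * ((Nat.factorial (j : ℕ) * Nat.factorial (m - (j : ℕ)) : ℕ) : ℝ) := by
            have := Nat.factorial_pos (j : ℕ)
            have := Nat.factorial_pos (m - (j : ℕ))
            positivity
          -- numerator bound
          have hnum : ∏ i : Fin (m + 1), (t - v i) ≤ τ ^ (m + 1) * (((m + 1)! : ℕ) : ℝ) := by
            calc ∏ i : Fin (m + 1), (t - v i)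
                ≤ ∏ i : Fin (m + 1), (((m + 1 - (i : ℕ) : ℕ) : ℝ) * τ) := by
                  refine Finset.prod_le_prod (fun i _ => htv_nonneg i) fun i _ => ?_
                  have := htv_le i; linarith
              _ = τ ^ (m + 1) * (((m + 1)! : ℕ) : ℝ) := by
                  rw [Finset.prod_mul_distrib, Finset.prod_const, Finset.card_univ,
                    Fintype.card_fin]
                  rw [show ∏ i : Fin (m + 1), ((m + 1 - (i : ℕ) : ℕ) : ℝ)
                      = (((m + 1)! : ℕ) : ℝ) from ?_]
                  · ring
                  · rw [← Nat.cast_prod]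
                    congr 1
                    rw [Fin.prod_univ_eq_prod_range (fun n => m + 1 - n) (m + 1)]
                    exact prod_sub_eq_factorial (m + 1)
          have hcore : (t - v j) * |ℓ j| ≤ τ * (((m + 1) * Nat.choose m (j : ℕ) : ℕ) : ℝ) := by
            rw [habsℓ, hden]
            rw [mul_div_assoc', Finset.mul_prod_erase Finset.univ (fun i => t - v i) (Finset.mem_univ j)]
            rw [div_le_iff₀ hdenpos]
            have hfact : τ * (((m + 1) * Nat.choose m (j : ℕ) : ℕ) : ℝ)
                * (τ ^ m * ((Nat.factorial (j : ℕ) * Nat.factorial (m - (j : ℕ)) : ℕ) : ℝ))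
                = τ ^ (m + 1) * (((m + 1)! : ℕ) : ℝ) := by
              have hch : (m + 1) * Nat.choose m (j : ℕ) * (Nat.factorial (j : ℕ) * Nat.factorial (m - (j : ℕ)))
                  = (m + 1)! := by
                rw [show (m + 1) * Nat.choose m (j : ℕ) * (Nat.factorial (j : ℕ) * Nat.factorial (m - (j : ℕ)))
                    = (m + 1) * (Nat.choose m (j : ℕ) * Nat.factorial (j : ℕ) * Nat.factorial (m - (j : ℕ))) from by ring]
                rw [Nat.choose_mul_factorial_mul_factorial hjm, Nat.factorial_succ]
              rw [← hch]
              push_cast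
              ring
            rw [hfact]
            exact hnum
          calc |(h t - h (v j)) * ℓ j| = |h t - h (v j)| * |ℓ j| := abs_mul _ _
            _ ≤ ((L : ℝ) * (t - v j)) * |ℓ j| :=
                mul_le_mul_of_nonneg_right hlip (abs_nonneg _)
            _ = (L : ℝ) * ((t - v j) * |ℓ j|) := by ring
            _ ≤ (L : ℝ) * (τ * (((m + 1) * Nat.choose m (j : ℕ) : ℕ) : ℝ)) :=
                mul_le_mul_of_nonneg_left hcore (NNReal.coe_nonneg L)
      _ = (L : ℝ) * τ * ∑ j : Fin (m + 1), (((m + 1) * Nat.choose m (j : ℕ) : ℕ) : ℝ) := by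
          rw [Finset.mul_sum]
          exact Finset.sum_congr rfl fun j _ => by ring
      _ = (L : ℝ) * τ * (((m + 1) * 2 ^ m : ℕ) : ℝ) := by
          rw [Fin.sum_univ_eq_sum_range
              (fun n => (((m + 1) * Nat.choose m n : ℕ) : ℝ)) (m + 1),
            ← Nat.cast_sum, ← Finset.mul_sum, Nat.sum_range_choose]
      _ = 2 ^ m * (m + 1) * τ * (L : ℝ) := by push_cast; ring
  simp only [hℓ, hv] at hgoal
  exact hgoal
end
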